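/- Let P_0, …, P_m be a symmetric Clifford system on ℝ^{2l} and let F(x) = ‖x‖⁴ − 2 ∑_{i=0}^m ⟨P_i x, x⟩². Then F satisfies the first Cartan–Münzner equation of degree 4: for every x ∈ ℝ^{2l}, ‖∇F(x)‖² = 16‖x‖⁶. -/

import Mathlib

open Matrix RealInnerProductSpace

/-- The FKM polynomial `F(x) = ‖x‖⁴ − 2 ∑ ⟨P_i x, x⟩²` of a
symmetric Clifford system on `ℝ^{2l}` satisfies the first Cartan–Münzner
equation of degree 4: `‖∇F(x)‖² = 16 ‖x‖⁶` for every `x`. -/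
theorem fkm_polynomial_first_cartan_munzner
    (l m : ℕ) (P : Fin (m + 1) → Matrix (Fin (2 * l)) (Fin (2 * l)) ℝ)
    (hsymm : ∀ i, (P i).IsSymm)
    (hcliff : ∀ i j, P i * P j + P j * P i =
      if i = j then (2 : Matrix (Fin (2 * l)) (Fin (2 * l)) ℝ) else 0)
    (x : EuclideanSpace ℝ (Fin (2 * l))) :
    ‖gradient (fun y : EuclideanSpace ℝ (Fin (2 * l)) =>
        ‖y‖ ^ 4 - 2 * ∑ i, ⟪Matrix.toEuclideanLin (P i) y, y⟫ ^ 2) x‖ ^ 2 =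
      16 * ‖x‖ ^ 6 := by
  classical
  let A : Fin (m + 1) → EuclideanSpace ℝ (Fin (2 * l)) →L[ℝ] EuclideanSpace ℝ (Fin (2 * l)) :=
    fun i => LinearMap.toContinuousLinearMap (Matrix.toEuclideanLin (P i))
  have hA : ∀ i (v : EuclideanSpace ℝ (Fin (2 * l))), A i v = Matrix.toEuclideanLin (P i) v :=
    fun i v => rfl
  have hsym : ∀ i (u v : EuclideanSpace ℝ (Fin (2 * l))), ⟪A i u, v⟫ = ⟪u, A i v⟫ := by
    intro i u v
    have hH : (P i).IsHermitian := by
      rw [Matrix.IsHermitian, Matrix.conjTranspose_eq_transpose_of_trivial]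
      exact hsymm i
    exact Matrix.isHermitian_iff_isSymmetric.mp hH u v
  have hmul : ∀ (M N : Matrix (Fin (2 * l)) (Fin (2 * l)) ℝ) (v : EuclideanSpace ℝ (Fin (2 * l))),
      Matrix.toEuclideanLin (M * N) v = Matrix.toEuclideanLin M (Matrix.toEuclideanLin N v) := by
    intro M N v
    simp [Matrix.toEuclideanLin_apply, Matrix.mulVec_mulVec]
  have hC : ∀ i j, ⟪A i x, A j x⟫ = if i = j then ‖x‖ ^ 2 else 0 := by
    intro i j
    have h1 : ⟪A i x, A j x⟫ = ⟪x, Matrix.toEuclideanLin (P i * P j) x⟫ := by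
      rw [hsym i, hmul]; simp only [hA]
    have h2 : ⟪A i x, A j x⟫ = ⟪x, Matrix.toEuclideanLin (P j * P i) x⟫ := by
      rw [real_inner_comm, hsym j, hmul]; simp only [hA]
    have h3 : (2 : ℝ) * ⟪A i x, A j x⟫ =
        ⟪x, Matrix.toEuclideanLin (P i * P j + P j * P i) x⟫ := by
      rw [map_add, LinearMap.add_apply, inner_add_right, ← h1, ← h2]; ring
    rw [hcliff i j] at h3
    by_cases hij : i = j
    · subst hij
      rw [if_pos rfl] at h3 ⊢
      have h2m : Matrix.toEuclideanLin (2 : Matrix (Fin (2 * l)) (Fin (2 * l)) ℝ) x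
          = (2 : ℝ) • x := by
        have h2' : (2 : Matrix (Fin (2 * l)) (Fin (2 * l)) ℝ) = (2 : ℝ) • 1 := by
          rw [two_smul]; exact (one_add_one_eq_two).symm
        rw [h2']
        simp [Matrix.toEuclideanLin_apply, Matrix.smul_mulVec, Matrix.one_mulVec]
      rw [h2m, inner_smul_right] at h3
      linarith [real_inner_self_eq_norm_sq ((A i) x), real_inner_self_eq_norm_sq x, h3]
    · rw [if_neg hij] at h3 ⊢
      rw [map_zero] at h3
      simp only [LinearMap.zero_apply, inner_zero_right] at h3
      linarith
  set c : Fin (m + 1) → ℝ := fun i => ⟪A i x, x⟫ with hc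
  set S : EuclideanSpace ℝ (Fin (2 * l)) := ∑ i, c i • A i x with hS
  set G : EuclideanSpace ℝ (Fin (2 * l)) := (4 * ‖x‖ ^ 2) • x - (8 : ℝ) • S with hG
  have hg1 : HasFDerivAt (fun y : EuclideanSpace ℝ (Fin (2 * l)) => ⟪y, y⟫)
      ((fderivInnerCLM ℝ (x, x)).comp
        ((ContinuousLinearMap.id ℝ _).prod (ContinuousLinearMap.id ℝ _))) x :=
    (hasFDerivAt_id x).inner ℝ (hasFDerivAt_id x)
  have hgi : ∀ i, HasFDerivAt
      (fun y : EuclideanSpace ℝ (Fin (2 * l)) => ⟪Matrix.toEuclideanLin (P i) y, y⟫)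
      ((fderivInnerCLM ℝ (A i x, x)).comp ((A i).prod (ContinuousLinearMap.id ℝ _))) x :=
    fun i => ((A i).hasFDerivAt).inner ℝ (hasFDerivAt_id x)
  have hgi2 : ∀ i, HasFDerivAt
      (fun y : EuclideanSpace ℝ (Fin (2 * l)) =>
        ⟪Matrix.toEuclideanLin (P i) y, y⟫ * ⟪Matrix.toEuclideanLin (P i) y, y⟫)
      (⟪Matrix.toEuclideanLin (P i) x, x⟫ •
          ((fderivInnerCLM ℝ (A i x, x)).comp ((A i).prod (ContinuousLinearMap.id ℝ _))) +
        ⟪Matrix.toEuclideanLin (P i) x, x⟫ •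
          ((fderivInnerCLM ℝ (A i x, x)).comp ((A i).prod (ContinuousLinearMap.id ℝ _)))) x :=
    fun i => (hgi i).mul (hgi i)
  have hsum := HasFDerivAt.sum (u := Finset.univ) (fun i _ => hgi2 i)
  have hs2 := hsum.const_mul (2 : ℝ)
  have hg1sq := hg1.mul hg1
  have hFtot := hg1sq.sub hs2
  have hfun : (fun y : EuclideanSpace ℝ (Fin (2 * l)) =>
      ‖y‖ ^ 4 - 2 * ∑ i, ⟪Matrix.toEuclideanLin (P i) y, y⟫ ^ 2) =
      (fun y : EuclideanSpace ℝ (Fin (2 * l)) =>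
      ⟪y, y⟫ * ⟪y, y⟫ -
        2 * ∑ i, ⟪Matrix.toEuclideanLin (P i) y, y⟫ * ⟪Matrix.toEuclideanLin (P i) y, y⟫) := by
    funext y
    have hp : ∀ a : ℝ, a ^ 2 = a * a := fun a => by ring
    simp only [hp, real_inner_self_eq_norm_sq]
    ring
  have hgrad : HasGradientAt (fun y : EuclideanSpace ℝ (Fin (2 * l)) =>
      ⟪y, y⟫ * ⟪y, y⟫ -
        2 * ∑ i, ⟪Matrix.toEuclideanLin (P i) y, y⟫ * ⟪Matrix.toEuclideanLin (P i) y, y⟫) G x := by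
    rw [hasGradientAt_iff_hasFDerivAt]
    convert hFtot using 1
    case e'_8 => rfl
    case e'_9 => rfl
    case e'_11 => funext y; simp [Finset.sum_apply]
    apply ContinuousLinearMap.ext
    intro v
    have hswap : ∀ i, ⟪A i v, x⟫ = ⟪A i x, v⟫ := fun i => by
      rw [hsym, real_inner_comm]
    have hvx : ⟪v, x⟫ = ⟪x, v⟫ := real_inner_comm _ _
    simp only [InnerProductSpace.toDual_apply_apply, ContinuousLinearMap.sub_apply,
      ContinuousLinearMap.add_apply, ContinuousLinearMap.smul_apply,
      ContinuousLinearMap.coe_sum', Finset.sum_apply, ContinuousLinearMap.comp_apply,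
      ContinuousLinearMap.prod_apply, ContinuousLinearMap.coe_id', id_eq,
      fderivInnerCLM_apply, smul_eq_mul, hswap, hvx, real_inner_self_eq_norm_sq]
    simp only [hG, hS, hc, inner_sub_left, real_inner_smul_left, sum_inner, ← hA]
    have h4 : ∑ i, (⟪A i x, x⟫ * (⟪A i x, v⟫ + ⟪A i x, v⟫) +
        ⟪A i x, x⟫ * (⟪A i x, v⟫ + ⟪A i x, v⟫)) = 4 * ∑ i, ⟪A i x, x⟫ * ⟪A i x, v⟫ := by
      rw [Finset.mul_sum]; exact Finset.sum_congr rfl fun i _ => by ring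
    rw [h4]
    ring
  rw [hfun, hgrad.gradient]
  have hxS : ⟪x, S⟫ = ∑ i, c i * c i := by
    rw [hS, inner_sum]
    exact Finset.sum_congr rfl fun i _ => by
      rw [real_inner_smul_right, real_inner_comm]
  have hSx : ⟪S, x⟫ = ∑ i, c i * c i := by rw [real_inner_comm]; exact hxS
  have hSS : ⟪S, S⟫ = (∑ i, c i * c i) * ‖x‖ ^ 2 := by
    have step1 : ⟪S, S⟫ = ∑ i, c i * ∑ j, c j * ⟪A i x, A j x⟫ := by
      rw [hS, sum_inner]
      refine Finset.sum_congr rfl fun i _ => ?_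
      rw [real_inner_smul_left]
      congr 1
      rw [inner_sum]
      exact Finset.sum_congr rfl fun j _ => by rw [real_inner_smul_right]
    rw [step1]
    have step2 : ∀ i : Fin (m + 1), (∑ j, c j * ⟪A i x, A j x⟫) = c i * ‖x‖ ^ 2 := by
      intro i
      have : ∀ j : Fin (m + 1), c j * ⟪A i x, A j x⟫ =
          if i = j then c j * ‖x‖ ^ 2 else 0 := by
        intro j
        rw [hC i j]
        by_cases h : i = j <;> simp [h]
      simp only [this, Finset.sum_ite_eq, Finset.mem_univ, if_pos]
    simp only [step2]
    rw [Finset.sum_mul]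
    exact Finset.sum_congr rfl fun i _ => by ring
  have hGG : ⟪G, G⟫ = 16 * ‖x‖ ^ 6 := by
    rw [hG]
    simp only [inner_sub_left, inner_sub_right, real_inner_smul_left, real_inner_smul_right]
    rw [hxS, hSx, hSS, real_inner_self_eq_norm_sq]
    ring
  rw [← real_inner_self_eq_norm_sq, hGG]
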